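/- For any a > 0, d ∈ (0, 1), and complex φ₁, φ₂ with Re(φ₁) > 0 and |a^d φ₂/φ₁| < 1, one has ∫₀^a log(φ₁ + s^d φ₂) ds = a [log(φ₁ + a^d φ₂) + d(₂F₁(1, 1/d; 1/d + 1; −a^d φ₂/φ₁) − 1)]. -/

import Mathlib

open MeasureTheory Real Set Complex

/-- Gauss' hypergeometric function ₂F₁(a, b; c; z), given by its power series. -/
noncomputable def hyp2F1 (a b c z : ℂ) : ℂ :=
  ∑' n : ℕ, ((∏ i ∈ Finset.range n, (a + i)) * (∏ i ∈ Finset.range n, (b + i))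
      / (∏ i ∈ Finset.range n, (c + i))) * z ^ n / (n.factorial : ℂ)

lemma telescope (b : ℂ) (n : ℕ) :
    b * ∏ i ∈ Finset.range n, (b + 1 + i) = (b + n) * ∏ i ∈ Finset.range n, (b + i) := by
  induction n with
  | zero => simp
  | succ n ih =>
    rw [Finset.prod_range_succ, Finset.prod_range_succ, ← mul_assoc, ih]
    push_cast
    ring

lemma prod_one_add (n : ℕ) : (∏ i ∈ Finset.range n, ((1:ℂ) + i)) = (n.factorial : ℂ) := by
  rw [← Finset.prod_range_add_one_eq_factorial n]
  push_cast
  exact Finset.prod_congr rfl fun i _ => by ring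

lemma hyp2F1_eq (r : ℝ) (hr : 0 < r) (x : ℂ) :
    hyp2F1 1 (r:ℂ) ((r:ℂ)+1) x = ∑' n : ℕ, ((r:ℂ)/((r:ℂ)+n)) * x^n := by
  unfold hyp2F1
  congr 1
  funext n
  have hfac : (n.factorial : ℂ) ≠ 0 := Nat.cast_ne_zero.mpr n.factorial_ne_zero
  have hrn : ∀ m : ℕ, (r:ℂ) + m ≠ 0 := by
    intro m
    rw [← Complex.ofReal_natCast, ← Complex.ofReal_add]
    exact_mod_cast Complex.ofReal_ne_zero.mpr (by positivity : r + (m:ℝ) ≠ 0)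
  have hQ : (∏ i ∈ Finset.range n, ((r:ℂ) + 1 + i)) ≠ 0 := by
    refine Finset.prod_ne_zero_iff.mpr fun i _ => ?_
    have := hrn (i + 1)
    push_cast at this ⊢
    convert this using 1
    ring
  have key := telescope (r:ℂ) n
  rw [prod_one_add]
  field_simp
  rw [eq_div_iff (hrn n)]
  linear_combination (-x ^ n) * key

lemma summable_f (r : ℝ) (hr : 0 < r) (x : ℂ) (hx : ‖x‖ < 1) :
    Summable (fun n : ℕ => ((r:ℂ)/((r:ℂ)+n)) * x^n) := by
  refine Summable.of_norm_bounded (g := fun n => ‖x‖^n)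
    (summable_geometric_of_lt_one (by positivity) hx) fun n => ?_
  have h1 : ((r:ℂ) + n) = ((r + n : ℝ) : ℂ) := by push_cast; ring
  rw [norm_mul, norm_div, norm_pow, h1]
  have : ‖((r:ℝ):ℂ)‖ / ‖((r + n : ℝ):ℂ)‖ ≤ 1 := by
    rw [Complex.norm_real, Complex.norm_real, Real.norm_of_nonneg hr.le,
      Real.norm_of_nonneg (by positivity)]
    rw [div_le_one (by positivity)]
    simp [Nat.cast_nonneg]
  calc ‖((r:ℝ):ℂ)‖ / ‖((r + n : ℝ):ℂ)‖ * ‖x‖^n ≤ 1 * ‖x‖^n := by gcongr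
    _ = ‖x‖^n := by rw [one_mul]

/-- ∫₀^a log(φ₁ + s^d φ₂) ds = a[log(φ₁ + a^d φ₂) + d(₂F₁(1, 1/d; 1/d+1; −a^d φ₂/φ₁) − 1)]. -/
theorem stmt8 (a d : ℝ) (ha : 0 < a) (hd : d ∈ Set.Ioo (0:ℝ) 1)
    (φ₁ φ₂ : ℂ) (h1 : 0 < φ₁.re)
    (hsmall : ‖((a ^ d : ℝ) : ℂ) * φ₂ / φ₁‖ < 1) :
    ∫ s in (0:ℝ)..a, Complex.log (φ₁ + ((s ^ d : ℝ) : ℂ) * φ₂)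
      = (a : ℂ) * (Complex.log (φ₁ + ((a ^ d : ℝ) : ℂ) * φ₂)
          + (d : ℂ) * (hyp2F1 1 (1 / (d : ℂ)) (1 / (d : ℂ) + 1)
              (-((a ^ d : ℝ) : ℂ) * φ₂ / φ₁) - 1)) := by
  obtain ⟨hd0, hd1⟩ := hd
  have hφ₁ : φ₁ ≠ 0 := fun h => by simp [h] at h1
  set z : ℂ := ((a ^ d : ℝ) : ℂ) * φ₂ / φ₁ with hzdef
  have hz : ‖z‖ < 1 := hsmall
  set w : ℝ → ℂ := fun s => ((s ^ d : ℝ) : ℂ) * φ₂ / φ₁ with hwdef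
  have habs : ∀ s : ℝ, 0 ≤ s → ‖w s‖ = s ^ d * ‖φ₂ / φ₁‖ := by
    intro s hs
    simp only [hwdef, mul_div_assoc, norm_mul, Complex.norm_real, Real.norm_eq_abs,
      _root_.abs_of_nonneg (Real.rpow_nonneg hs d)]
  have hwle : ∀ s ∈ Set.Icc (0:ℝ) a, ‖w s‖ ≤ ‖z‖ := by
    intro s hs
    rw [habs s hs.1, show z = w a from rfl, habs a ha.le]
    exact mul_le_mul_of_nonneg_right (Real.rpow_le_rpow hs.1 hs.2 hd0.le) (by positivity)
  have hw1 : ∀ s ∈ Set.Icc (0:ℝ) a, ‖w s‖ < 1 :=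
    fun s hs => lt_of_le_of_lt (hwle s hs) hz
  have hwne : ∀ s ∈ Set.Icc (0:ℝ) a, (1:ℂ) + w s ≠ 0 := by
    intro s hs h
    have : w s = -1 := by linear_combination h
    have h2 := hw1 s hs
    rw [this] at h2
    simp at h2
  have hre : ∀ s ∈ Set.Icc (0:ℝ) a, 0 < ((1:ℂ) + w s).re := by
    intro s hs
    have h2 : |(w s).re| ≤ ‖w s‖ := Complex.abs_re_le_norm _
    have := hw1 s hs
    simp only [Complex.add_re, Complex.one_re]
    have := abs_le.mp h2
    linarith
  have hlog : ∀ s ∈ Set.Icc (0:ℝ) a,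
      Complex.log (φ₁ + ((s ^ d : ℝ) : ℂ) * φ₂) = Complex.log φ₁ + Complex.log (1 + w s) := by
    intro s hs
    have heq : φ₁ + ((s ^ d : ℝ) : ℂ) * φ₂ = φ₁ * (1 + w s) := by
      simp only [hwdef]
      field_simp
    rw [heq]
    refine Complex.log_mul hφ₁ (hwne s hs) ?_
    have ha1 : |Complex.arg φ₁| < π/2 := Complex.abs_arg_lt_pi_div_two_iff.mpr (Or.inl h1)
    have ha2 : |Complex.arg (1 + w s)| < π/2 :=
      Complex.abs_arg_lt_pi_div_two_iff.mpr (Or.inl (hre s hs))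
    have h3 := abs_lt.mp ha1
    have h4 := abs_lt.mp ha2
    constructor <;> [linarith; linarith]
  -- continuity
  have hrpow : Continuous (fun s : ℝ => s ^ d) := Real.continuous_rpow_const hd0.le
  have hcontw : Continuous w := by
    simp only [hwdef]
    exact (Complex.continuous_ofReal.comp hrpow).mul continuous_const |>.div_const _
  -- the series terms
  set F : ℕ → ℝ → ℂ := fun n s => (-1)^(n+1) * (w s)^n / (n:ℂ) with hFdef
  have hFcont : ∀ n, Continuous (F n) :=
    fun n => ((continuous_const.mul (hcontw.pow n)).div_const _)
  have hFint : ∀ n, IntegrableOn (F n) (Set.Ioc 0 a) :=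
    fun n => (hFcont n).integrableOn_Ioc
  have hFnorm : ∀ n, ∀ s ∈ Set.Icc (0:ℝ) a, ‖F n s‖ ≤ ‖z‖^n := by
    intro n s hs
    have h5 : ‖(w s)^n‖ ≤ ‖z‖^n := by
      rw [norm_pow]
      exact pow_le_pow_left₀ (norm_nonneg _) (hwle s hs) n
    match n with
    | 0 => simp [hFdef]
    | (m+1) =>
      simp only [hFdef, norm_div, norm_mul, norm_pow, norm_neg, norm_one, one_pow, one_mul,
        Complex.norm_natCast]
      calc ‖w s‖^(m+1) / ((m+1:ℕ):ℝ) ≤ ‖w s‖^(m+1) / 1 := by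
            gcongr; exact_mod_cast Nat.one_le_iff_ne_zero.mpr (Nat.succ_ne_zero m)
        _ = ‖w s‖^(m+1) := div_one _
        _ ≤ ‖z‖^(m+1) := pow_le_pow_left₀ (norm_nonneg _) (hwle s hs) _
  have hsumnorm : Summable (fun n => ∫ s in Set.Ioc (0:ℝ) a, ‖F n s‖) := by
    refine Summable.of_nonneg_of_le
      (fun n => integral_nonneg fun s => norm_nonneg _) (fun n => ?_)
      (((summable_geometric_of_lt_one (by positivity) hz)).mul_left a)
    calc ∫ s in Set.Ioc (0:ℝ) a, ‖F n s‖
        ≤ ∫ _ in Set.Ioc (0:ℝ) a, ‖z‖^n := by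
          refine setIntegral_mono_on (hFint n).norm (integrableOn_const ?_)
            measurableSet_Ioc (fun s hs => hFnorm n s (Set.Ioc_subset_Icc_self hs))
          exact measure_Ioc_lt_top.ne
      _ = a * ‖z‖^n := by
          rw [setIntegral_const]
          simp [Real.volume_Ioc, ENNReal.toReal_ofReal ha.le, ha.le]
  have hS : HasSum (fun n => ∫ s in Set.Ioc (0:ℝ) a, F n s)
      (∫ s in Set.Ioc (0:ℝ) a, Complex.log (1 + w s)) := by
    have key := MeasureTheory.hasSum_integral_of_summable_integral_norm
      (μ := volume.restrict (Set.Ioc (0:ℝ) a)) hFint hsumnorm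
    have heqint : (∫ s in Set.Ioc (0:ℝ) a, (∑' n, F n s))
        = ∫ s in Set.Ioc (0:ℝ) a, Complex.log (1 + w s) :=
      setIntegral_congr_fun measurableSet_Ioc fun s hs =>
        (Complex.hasSum_taylorSeries_log
          (by exact hw1 s (Set.Ioc_subset_Icc_self hs))).tsum_eq
    rwa [heqint] at key
  -- compute each integral
  set G : ℕ → ℂ := fun n => (a:ℂ) * ((-1)^(n+1) * z^n / ((n:ℂ) * ((d:ℂ)*n + 1))) with hGdef
  have hG : ∀ n, (∫ s in Set.Ioc (0:ℝ) a, F n s) = G n := by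
    intro n
    match n with
    | 0 => simp [hFdef, hGdef]
    | (m+1) =>
      have hcongr : ∀ s ∈ Set.Ioc (0:ℝ) a, F (m+1) s
          = ((-1)^(m+1+1) * (φ₂/φ₁)^(m+1) / ((m+1:ℕ):ℂ)) * ((s ^ (d*(m+1:ℕ)) : ℝ) : ℂ) := by
        intro s hs
        have hs0 : (0:ℝ) ≤ s := hs.1.le
        have hpow : ((s ^ d : ℝ):ℂ)^(m+1) = ((s ^ (d*(m+1:ℕ)) : ℝ):ℂ) := by
          rw [← Complex.ofReal_pow]
          congr 1
          rw [Real.rpow_mul hs0, Real.rpow_natCast]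
        simp only [hFdef, hwdef, mul_div_assoc, mul_pow, hpow]
        ring
      rw [setIntegral_congr_fun measurableSet_Ioc hcongr, MeasureTheory.integral_const_mul]
      have hI : (∫ s in Set.Ioc (0:ℝ) a, ((s ^ (d*(m+1:ℕ)) : ℝ) : ℂ))
          = ((a ^ (d*(m+1:ℕ)+1) / (d*(m+1:ℕ)+1) : ℝ) : ℂ) := by
        rw [← intervalIntegral.integral_of_le ha.le, intervalIntegral.integral_ofReal]
        congr 1
        rw [integral_rpow (Or.inl (lt_of_lt_of_le neg_one_lt_zero (by positivity) : (-1:ℝ) < d*(m+1:ℕ)))]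
        rw [Real.zero_rpow (by positivity : d*(m+1:ℕ)+1 ≠ 0)]
        ring
      rw [hI]
      have hapow : (a:ℝ) ^ (d*(m+1:ℕ)+1) = a * ((a^d)^(m+1) : ℝ) := by
        rw [Real.rpow_add ha, Real.rpow_one, Real.rpow_mul ha.le, Real.rpow_natCast]
        ring
      have hc1 : ((m+1:ℕ):ℂ) ≠ 0 := Nat.cast_ne_zero.mpr (Nat.succ_ne_zero m)
      have hc2 : (d:ℂ)*((m+1:ℕ):ℂ) + 1 ≠ 0 := by
        have h0 : (0:ℝ) < d*((m+1:ℕ):ℝ) + 1 := by positivity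
        intro hcontra
        apply h0.ne'
        have : (((d*((m+1:ℕ):ℝ) + 1 : ℝ)):ℂ) = 0 := by push_cast; push_cast at hcontra; exact hcontra
        exact_mod_cast this
      simp only [hGdef, hzdef, hapow]
      push_cast
      field_simp
      ring
  have hGS : HasSum G (∫ s in Set.Ioc (0:ℝ) a, Complex.log (1 + w s)) := by
    rwa [show (fun n => ∫ s in Set.Ioc (0:ℝ) a, F n s) = G from funext hG] at hS
  -- LHS
  have hint2 : IntervalIntegrable (fun s => Complex.log (1 + w s)) volume 0 a := by
    apply ContinuousOn.intervalIntegrable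
    rw [Set.uIcc_of_le ha.le]
    refine continuousOn_of_forall_continuousAt fun s hs => ?_
    exact ((continuous_const.add hcontw).continuousAt).clog
      (Complex.mem_slitPlane_iff.mpr (Or.inl (hre s hs)))
  have hlhs : (∫ s in (0:ℝ)..a, Complex.log (φ₁ + ((s ^ d : ℝ) : ℂ) * φ₂))
      = (a:ℂ) * Complex.log φ₁ + ∫ s in Set.Ioc (0:ℝ) a, Complex.log (1 + w s) := by
    rw [intervalIntegral.integral_congr (g := fun s => Complex.log φ₁ + Complex.log (1 + w s))
      (by rw [Set.uIcc_of_le ha.le]; exact hlog)]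
    rw [intervalIntegral.integral_add intervalIntegrable_const hint2,
      intervalIntegral.integral_const, intervalIntegral.integral_of_le ha.le]
    simp [Complex.real_smul]
  -- RHS series
  set r : ℝ := 1/d with hrdef
  have hr : 0 < r := by positivity
  set f : ℕ → ℂ := fun n => ((r:ℂ)/((r:ℂ)+n)) * (-z)^n with hfdef
  set H : ℂ := ∑' n, f n with hHdef
  have hH : hyp2F1 1 (1 / (d : ℂ)) (1 / (d : ℂ) + 1) (-((a ^ d : ℝ) : ℂ) * φ₂ / φ₁) = H := by
    have h1 : -((a ^ d : ℝ) : ℂ) * φ₂ / φ₁ = -z := by rw [hzdef]; ring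
    have h2 : (1/(d:ℂ)) = ((r:ℝ):ℂ) := by rw [hrdef]; push_cast; ring
    rw [h1, h2, hyp2F1_eq r hr (-z), hHdef]
  have hfH : HasSum f H := (summable_f r hr (-z) (by rwa [norm_neg])).hasSum
  have hf0 : f 0 = 1 := by
    have : (r:ℂ) ≠ 0 := Complex.ofReal_ne_zero.mpr hr.ne'
    simp [hfdef, div_self this]
  have hfshift : HasSum (fun n => f (n+1)) (H - 1) := by
    refine (hasSum_nat_add_iff 1).mpr ?_
    simpa [hf0] using hfH
  set t : ℕ → ℂ := fun n : ℕ => (-1)^(n+1) * z^n / (n:ℂ) with htdef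
  have ht : HasSum t (Complex.log (1+z)) :=
    Complex.hasSum_taylorSeries_log (by exact hz)
  have ht0 : t 0 = 0 := by simp [htdef]
  have htshift : HasSum (fun n => t (n+1)) (Complex.log (1+z)) := by
    refine (hasSum_nat_add_iff 1).mpr ?_
    simpa [ht0] using ht
  have hG0 : G 0 = 0 := by simp [hGdef]
  have hGshift : HasSum (fun n => G (n+1)) (∫ s in Set.Ioc (0:ℝ) a, Complex.log (1 + w s)) := by
    refine (hasSum_nat_add_iff 1).mpr ?_
    simpa [hG0] using hGS
  have combined := (htshift.mul_left (a:ℂ)).add (hfshift.mul_left ((a:ℂ)*(d:ℂ)))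
  have hsum_eq : (∫ s in Set.Ioc (0:ℝ) a, Complex.log (1 + w s))
      = (a:ℂ) * Complex.log (1+z) + (a:ℂ)*(d:ℂ)*(H - 1) := by
    refine hGshift.unique ?_
    refine (congrArg (fun g => HasSum g _) ?_).mpr combined
    funext n
    have hc1 : ((n:ℂ)+1) ≠ 0 := Nat.cast_add_one_ne_zero n
    have hc2 : (d:ℂ)*((n:ℂ)+1) + 1 ≠ 0 := by
      have h0 : (0:ℝ) < d*((n:ℝ)+1) + 1 := by positivity
      intro hcontra
      apply h0.ne'
      have : (((d*((n:ℝ)+1) + 1 : ℝ)):ℂ) = 0 := by push_cast; exact hcontra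
      exact_mod_cast this
    have hd4 : (d:ℂ) ≠ 0 := Complex.ofReal_ne_zero.mpr hd0.ne'
    have hc3 : 1/(d:ℂ) + ((n:ℂ)+1) ≠ 0 := by
      have h0 : (0:ℝ) < 1/d + ((n:ℝ)+1) := by positivity
      intro hcontra
      apply h0.ne'
      have : (((1/d + ((n:ℝ)+1) : ℝ)):ℂ) = 0 := by push_cast; exact hcontra
      exact_mod_cast this
    have key : (-1)/(((n:ℂ)+1) * ((d:ℂ)*((n:ℂ)+1)+1))
        = (-1)/((n:ℂ)+1) + (d:ℂ)/((d:ℂ)*((n:ℂ)+1)+1) := by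
      rw [div_add_div _ _ hc1 hc2, div_eq_div_iff (mul_ne_zero hc1 hc2) (mul_ne_zero hc1 hc2)]
      ring
    have e1 : (d:ℂ) * ((1/(d:ℂ))/((1/(d:ℂ)) + ((n:ℂ)+1))) = (d:ℂ)/((d:ℂ)*((n:ℂ)+1)+1) := by
      rw [← mul_div_assoc, div_eq_div_iff hc3 hc2, mul_one_div_cancel hd4, one_mul,
        mul_add (d:ℂ) (1/(d:ℂ)) ((n:ℂ)+1), mul_one_div_cancel hd4]
      ring
    calc G (n+1)
        = (a:ℂ) * ((-1)^(n+1) * z^(n+1) * ((-1)/(((n:ℂ)+1) * ((d:ℂ)*((n:ℂ)+1)+1)))) := by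
          simp only [hGdef]
          push_cast
          ring
      _ = (a:ℂ) * ((-1)^(n+1) * z^(n+1)
            * ((-1)/((n:ℂ)+1) + (d:ℂ) * ((1/(d:ℂ))/((1/(d:ℂ)) + ((n:ℂ)+1))))) := by
          rw [key, e1]
      _ = (a:ℂ) * t (n+1) + (a:ℂ)*(d:ℂ) * f (n+1) := by
          simp only [htdef, hfdef, hrdef]
          rw [neg_pow z (n+1)]
          push_cast
          ring
  rw [hlhs, hsum_eq, hH, hlog a ⟨ha.le, le_refl a⟩]
  have hwz : w a = z := rfl
  rw [hwz]
  ring
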